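/- There exists a constant C > 0, depending only on δ, β_S, β_Ω, such that for all h ∈ (0,1/4) and all (r,z) with 0 < r < δ and 0 < z < h + γ_s(r), the derivatives of Ψ with respect to the parameter h satisfy: |∂_hΨ(r,z)| ≤ C/(h+γ_s(r)); |∂_{rh}Ψ(r,z)| ≤ C/(h+γ_s(r)) + C·r/(h+γ_s(r))²; |∂_{zzh}Ψ(r,z)| + |∂_{rrh}Ψ(r,z)| + |∂_{hz}Ψ(r,z)| ≤ C/(h+γ_s(r))²; and |∂_{rzh}Ψ(r,z)| ≤ C/(h+γ_s(r))² + C·r/(h+γ_s(r))³. -/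

import Mathlib

open Real MeasureTheory intervalIntegral

noncomputable section

/-- `γ_s(r) = 1 - √(1 - r²)`. -/
def gam (r : ℝ) : ℝ := 1 - Real.sqrt (1 - r ^ 2)

/-- `α_P(r) = (h + γ_s(r)) / β_Ω`. -/
def aP (βΩ h r : ℝ) : ℝ := (h + gam r) / βΩ

/-- `α_S(r) = (1/β_S + 2) (h + γ_s(r))`. -/
def aS (βS h r : ℝ) : ℝ := (1 / βS + 2) * (h + gam r)

/-- The cubic `Φ(r,t) = P₁(r) t + P₂(r) t² + P₃(r) t³` of the slip case. -/
def Phi (βS βΩ h r t : ℝ) : ℝ :=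
  6 * (2 + aS βS h r) / (12 + 4 * (aS βS h r + aP βΩ h r) + aS βS h r * aP βΩ h r) * t +
  3 * (2 + aS βS h r) * aP βΩ h r / (12 + 4 * (aS βS h r + aP βΩ h r) + aS βS h r * aP βΩ h r) * t ^ 2 +
  -(2 * (aS βS h r + aS βS h r * aP βΩ h r + aP βΩ h r)) / (12 + 4 * (aS βS h r + aP βΩ h r) + aS βS h r * aP βΩ h r) * t ^ 3

/-- `Ψ(r,z) = Φ(r, z / (h + γ_s(r)))`. -/
def Psi (βS βΩ h r z : ℝ) : ℝ := Phi βS βΩ h r (z / (h + gam r))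

/-- Partial derivative in the first (`r`) variable. -/
def dR (f : ℝ → ℝ → ℝ) : ℝ → ℝ → ℝ := fun r z => deriv (fun r' => f r' z) r

/-- Partial derivative in the second (`z`) variable. -/
def dZ (f : ℝ → ℝ → ℝ) : ℝ → ℝ → ℝ := fun r z => deriv (fun z' => f r z') z

/-- Partial derivative in the first (`h`) variable of a function of `(h,r,z)`. -/
def dH3 (f : ℝ → ℝ → ℝ → ℝ) : ℝ → ℝ → ℝ → ℝ := fun h r z => deriv (fun h' => f h' r z) h

/-- Partial derivative in the second (`r`) variable of a function of `(h,r,z)`. -/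
def dR3 (f : ℝ → ℝ → ℝ → ℝ) : ℝ → ℝ → ℝ → ℝ := fun h r z => deriv (fun r' => f h r' z) r

/-- Partial derivative in the third (`z`) variable of a function of `(h,r,z)`. -/
def dZ3 (f : ℝ → ℝ → ℝ → ℝ) : ℝ → ℝ → ℝ → ℝ := fun h r z => deriv (fun z' => f h r z') z

namespace PsiAux

/-! ### Auxiliary machinery -/

/-- Derivative of an explicit polynomial of degree ≤ 7. -/
lemma hasDerivAt_poly (a0 a1 a2 a3 a4 a5 a6 a7 s : ℝ) :
    HasDerivAt (fun x : ℝ => a0 + a1 * x ^ 1 + a2 * x ^ 2 + a3 * x ^ 3 + a4 * x ^ 4 +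
        a5 * x ^ 5 + a6 * x ^ 6 + a7 * x ^ 7)
      (a1 + 2*a2*s + 3*a3*s^2 + 4*a4*s^3 + 5*a5*s^4 + 6*a6*s^5 + 7*a7*s^6) s := by
  have h := (((((((hasDerivAt_const s a0).add ((hasDerivAt_pow 1 s).const_mul a1)).add
    ((hasDerivAt_pow 2 s).const_mul a2)).add ((hasDerivAt_pow 3 s).const_mul a3)).add
    ((hasDerivAt_pow 4 s).const_mul a4)).add ((hasDerivAt_pow 5 s).const_mul a5)).add
    ((hasDerivAt_pow 6 s).const_mul a6)).add ((hasDerivAt_pow 7 s).const_mul a7)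
  refine h.congr_deriv ?_; symm
  push_cast; ring

lemma exists_bound (f : ℝ → ℝ) (hf : Continuous f) :
    ∃ M : ℝ, 0 < M ∧ ∀ s ∈ Set.Icc (0:ℝ) 1, |f s| ≤ M := by
  obtain ⟨M, hM⟩ := (isCompact_Icc : IsCompact (Set.Icc (0:ℝ) 1)).exists_bound_of_continuousOn
    hf.continuousOn
  refine ⟨max M 1, lt_of_lt_of_le one_pos (le_max_right _ _), fun s hs => ?_⟩
  have := hM s hs
  rw [Real.norm_eq_abs] at this
  exact this.trans (le_max_left _ _)
def vv (c1 c2 x : ℝ) : ℝ :=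
  0 + (12) * x ^ 1 + (4 * c2 + 4 * c1) * x ^ 2 + (c1 * c2) * x ^ 3 + (0 : ℝ) * x ^ 4 + (0 : ℝ) * x ^ 5 + (0 : ℝ) * x ^ 6 + (0 : ℝ) * x ^ 7

def vd (c1 c2 x : ℝ) : ℝ :=
  (12) + (8 * c2 + 8 * c1) * x ^ 1 + (3 * c1 * c2) * x ^ 2 + (0 : ℝ) * x ^ 3 + (0 : ℝ) * x ^ 4 + (0 : ℝ) * x ^ 5 + (0 : ℝ) * x ^ 6 + (0 : ℝ) * x ^ 7

def DD (c1 c2 x : ℝ) : ℝ :=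
  (12) + (4 * c2 + 4 * c1) * x ^ 1 + (c1 * c2) * x ^ 2 + (0 : ℝ) * x ^ 3 + (0 : ℝ) * x ^ 4 + (0 : ℝ) * x ^ 5 + (0 : ℝ) * x ^ 6 + (0 : ℝ) * x ^ 7

def qA0 (c1 c2 x : ℝ) : ℝ :=
  (12) + (6 * c1) * x ^ 1 + (0 : ℝ) * x ^ 2 + (0 : ℝ) * x ^ 3 + (0 : ℝ) * x ^ 4 + (0 : ℝ) * x ^ 5 + (0 : ℝ) * x ^ 6 + (0 : ℝ) * x ^ 7

def qA1 (c1 c2 x : ℝ) : ℝ :=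
  (-144) + (-96 * c2 - 96 * c1) * x ^ 1 + (-60 * c1 * c2 - 24 * c1^2) * x ^ 2 + (-12 * c1^2 * c2) * x ^ 3 + (0 : ℝ) * x ^ 4 + (0 : ℝ) * x ^ 5 + (0 : ℝ) * x ^ 6 + (0 : ℝ) * x ^ 7

def qA2 (c1 c2 x : ℝ) : ℝ :=
  (3456) + (3456 * c2 + 3456 * c1) * x ^ 1 + (1152 * c2^2 + 3168 * c1 * c2 + 1152 * c1^2) * x ^ 2 + (960 * c1 * c2^2 + 1008 * c1^2 * c2 + 192 * c1^3) * x ^ 3 + (288 * c1^2 * c2^2 + 144 * c1^3 * c2) * x ^ 4 + (36 * c1^3 * c2^2) * x ^ 5 + (0 : ℝ) * x ^ 6 + (0 : ℝ) * x ^ 7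

def qA3 (c1 c2 x : ℝ) : ℝ :=
  (-124416) + (-165888 * c2 - 165888 * c1) * x ^ 1 + (-82944 * c2^2 - 207360 * c1 * c2 - 82944 * c1^2) * x ^ 2 + (-18432 * c2^3 - 96768 * c1 * c2^2 - 96768 * c1^2 * c2 - 18432 * c1^3) * x ^ 3 + (-19584 * c1 * c2^3 - 42336 * c1^2 * c2^2 - 20736 * c1^3 * c2 - 2304 * c1^4) * x ^ 4 + (-8064 * c1^2 * c2^3 - 8640 * c1^3 * c2^2 - 2304 * c1^4 * c2) * x ^ 5 + (-1584 * c1^3 * c2^3 - 864 * c1^4 * c2^2) * x ^ 6 + (-144 * c1^4 * c2^3) * x ^ 7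

def qAd0 (c1 c2 x : ℝ) : ℝ :=
  (6 * c1) + (0 : ℝ) * x ^ 1 + (0 : ℝ) * x ^ 2 + (0 : ℝ) * x ^ 3 + (0 : ℝ) * x ^ 4 + (0 : ℝ) * x ^ 5 + (0 : ℝ) * x ^ 6 + (0 : ℝ) * x ^ 7

def qAd1 (c1 c2 x : ℝ) : ℝ :=
  (-96 * c2 - 96 * c1) + (-120 * c1 * c2 - 48 * c1^2) * x ^ 1 + (-36 * c1^2 * c2) * x ^ 2 + (0 : ℝ) * x ^ 3 + (0 : ℝ) * x ^ 4 + (0 : ℝ) * x ^ 5 + (0 : ℝ) * x ^ 6 + (0 : ℝ) * x ^ 7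

def qAd2 (c1 c2 x : ℝ) : ℝ :=
  (3456 * c2 + 3456 * c1) + (2304 * c2^2 + 6336 * c1 * c2 + 2304 * c1^2) * x ^ 1 + (2880 * c1 * c2^2 + 3024 * c1^2 * c2 + 576 * c1^3) * x ^ 2 + (1152 * c1^2 * c2^2 + 576 * c1^3 * c2) * x ^ 3 + (180 * c1^3 * c2^2) * x ^ 4 + (0 : ℝ) * x ^ 5 + (0 : ℝ) * x ^ 6 + (0 : ℝ) * x ^ 7

def qB0 (c1 c2 x : ℝ) : ℝ :=
  (6 * c2) + (3 * c1 * c2) * x ^ 1 + (0 : ℝ) * x ^ 2 + (0 : ℝ) * x ^ 3 + (0 : ℝ) * x ^ 4 + (0 : ℝ) * x ^ 5 + (0 : ℝ) * x ^ 6 + (0 : ℝ) * x ^ 7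

def qB1 (c1 c2 x : ℝ) : ℝ :=
  (-72 * c2) + (-48 * c2^2 - 48 * c1 * c2) * x ^ 1 + (-30 * c1 * c2^2 - 12 * c1^2 * c2) * x ^ 2 + (-6 * c1^2 * c2^2) * x ^ 3 + (0 : ℝ) * x ^ 4 + (0 : ℝ) * x ^ 5 + (0 : ℝ) * x ^ 6 + (0 : ℝ) * x ^ 7

def qB2 (c1 c2 x : ℝ) : ℝ :=
  (1728 * c2) + (1728 * c2^2 + 1728 * c1 * c2) * x ^ 1 + (576 * c2^3 + 1584 * c1 * c2^2 + 576 * c1^2 * c2) * x ^ 2 + (480 * c1 * c2^3 + 504 * c1^2 * c2^2 + 96 * c1^3 * c2) * x ^ 3 + (144 * c1^2 * c2^3 + 72 * c1^3 * c2^2) * x ^ 4 + (18 * c1^3 * c2^3) * x ^ 5 + (0 : ℝ) * x ^ 6 + (0 : ℝ) * x ^ 7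

def qB3 (c1 c2 x : ℝ) : ℝ :=
  (-62208 * c2) + (-82944 * c2^2 - 82944 * c1 * c2) * x ^ 1 + (-41472 * c2^3 - 103680 * c1 * c2^2 - 41472 * c1^2 * c2) * x ^ 2 + (-9216 * c2^4 - 48384 * c1 * c2^3 - 48384 * c1^2 * c2^2 - 9216 * c1^3 * c2) * x ^ 3 + (-9792 * c1 * c2^4 - 21168 * c1^2 * c2^3 - 10368 * c1^3 * c2^2 - 1152 * c1^4 * c2) * x ^ 4 + (-4032 * c1^2 * c2^4 - 4320 * c1^3 * c2^3 - 1152 * c1^4 * c2^2) * x ^ 5 + (-792 * c1^3 * c2^4 - 432 * c1^4 * c2^3) * x ^ 6 + (-72 * c1^4 * c2^4) * x ^ 7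

def qBd0 (c1 c2 x : ℝ) : ℝ :=
  (3 * c1 * c2) + (0 : ℝ) * x ^ 1 + (0 : ℝ) * x ^ 2 + (0 : ℝ) * x ^ 3 + (0 : ℝ) * x ^ 4 + (0 : ℝ) * x ^ 5 + (0 : ℝ) * x ^ 6 + (0 : ℝ) * x ^ 7

def qBd1 (c1 c2 x : ℝ) : ℝ :=
  (-48 * c2^2 - 48 * c1 * c2) + (-60 * c1 * c2^2 - 24 * c1^2 * c2) * x ^ 1 + (-18 * c1^2 * c2^2) * x ^ 2 + (0 : ℝ) * x ^ 3 + (0 : ℝ) * x ^ 4 + (0 : ℝ) * x ^ 5 + (0 : ℝ) * x ^ 6 + (0 : ℝ) * x ^ 7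

def qBd2 (c1 c2 x : ℝ) : ℝ :=
  (1728 * c2^2 + 1728 * c1 * c2) + (1152 * c2^3 + 3168 * c1 * c2^2 + 1152 * c1^2 * c2) * x ^ 1 + (1440 * c1 * c2^3 + 1512 * c1^2 * c2^2 + 288 * c1^3 * c2) * x ^ 2 + (576 * c1^2 * c2^3 + 288 * c1^3 * c2^2) * x ^ 3 + (90 * c1^3 * c2^3) * x ^ 4 + (0 : ℝ) * x ^ 5 + (0 : ℝ) * x ^ 6 + (0 : ℝ) * x ^ 7

def qC0 (c1 c2 x : ℝ) : ℝ :=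
  (-2 * c2 - 2 * c1) + (-2 * c1 * c2) * x ^ 1 + (0 : ℝ) * x ^ 2 + (0 : ℝ) * x ^ 3 + (0 : ℝ) * x ^ 4 + (0 : ℝ) * x ^ 5 + (0 : ℝ) * x ^ 6 + (0 : ℝ) * x ^ 7

def qC1 (c1 c2 x : ℝ) : ℝ :=
  (48 * c2 + 48 * c1) + (24 * c2^2 + 72 * c1 * c2 + 24 * c1^2) * x ^ 1 + (24 * c1 * c2^2 + 24 * c1^2 * c2) * x ^ 2 + (6 * c1^2 * c2^2) * x ^ 3 + (0 : ℝ) * x ^ 4 + (0 : ℝ) * x ^ 5 + (0 : ℝ) * x ^ 6 + (0 : ℝ) * x ^ 7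

def qC2 (c1 c2 x : ℝ) : ℝ :=
  (-1728 * c2 - 1728 * c1) + (-1536 * c2^2 - 3648 * c1 * c2 - 1536 * c1^2) * x ^ 1 + (-384 * c2^3 - 2160 * c1 * c2^2 - 2160 * c1^2 * c2 - 384 * c1^3) * x ^ 2 + (-432 * c1 * c2^3 - 1008 * c1^2 * c2^2 - 432 * c1^3 * c2) * x ^ 3 + (-168 * c1^2 * c2^3 - 168 * c1^3 * c2^2) * x ^ 4 + (-24 * c1^3 * c2^3) * x ^ 5 + (0 : ℝ) * x ^ 6 + (0 : ℝ) * x ^ 7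

def qC3 (c1 c2 x : ℝ) : ℝ :=
  (82944 * c2 + 82944 * c1) + (103680 * c2^2 + 228096 * c1 * c2 + 103680 * c1^2) * x ^ 1 + (46080 * c2^3 + 193536 * c1 * c2^2 + 193536 * c1^2 * c2 + 46080 * c1^3) * x ^ 2 + (7680 * c2^4 + 69888 * c1 * c2^3 + 131328 * c1^2 * c2^2 + 69888 * c1^3 * c2 + 7680 * c1^4) * x ^ 3 + (9984 * c1 * c2^4 + 40320 * c1^2 * c2^3 + 40320 * c1^3 * c2^2 + 9984 * c1^4 * c2) * x ^ 4 + (5040 * c1^2 * c2^4 + 10800 * c1^3 * c2^3 + 5040 * c1^4 * c2^2) * x ^ 5 + (1200 * c1^3 * c2^4 + 1200 * c1^4 * c2^3) * x ^ 6 + (120 * c1^4 * c2^4) * x ^ 7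

def qCd0 (c1 c2 x : ℝ) : ℝ :=
  (-2 * c1 * c2) + (0 : ℝ) * x ^ 1 + (0 : ℝ) * x ^ 2 + (0 : ℝ) * x ^ 3 + (0 : ℝ) * x ^ 4 + (0 : ℝ) * x ^ 5 + (0 : ℝ) * x ^ 6 + (0 : ℝ) * x ^ 7

def qCd1 (c1 c2 x : ℝ) : ℝ :=
  (24 * c2^2 + 72 * c1 * c2 + 24 * c1^2) + (48 * c1 * c2^2 + 48 * c1^2 * c2) * x ^ 1 + (18 * c1^2 * c2^2) * x ^ 2 + (0 : ℝ) * x ^ 3 + (0 : ℝ) * x ^ 4 + (0 : ℝ) * x ^ 5 + (0 : ℝ) * x ^ 6 + (0 : ℝ) * x ^ 7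

def qCd2 (c1 c2 x : ℝ) : ℝ :=
  (-1536 * c2^2 - 3648 * c1 * c2 - 1536 * c1^2) + (-768 * c2^3 - 4320 * c1 * c2^2 - 4320 * c1^2 * c2 - 768 * c1^3) * x ^ 1 + (-1296 * c1 * c2^3 - 3024 * c1^2 * c2^2 - 1296 * c1^3 * c2) * x ^ 2 + (-672 * c1^2 * c2^3 - 672 * c1^3 * c2^2) * x ^ 3 + (-120 * c1^3 * c2^3) * x ^ 4 + (0 : ℝ) * x ^ 5 + (0 : ℝ) * x ^ 6 + (0 : ℝ) * x ^ 7

lemma hasDerivAt_vv (c1 c2 s : ℝ) :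
    HasDerivAt (fun x => vv c1 c2 x) (vd c1 c2 s) s := by
  simp only [vv, vd]
  convert hasDerivAt_poly 0 (12) (4 * c2 + 4 * c1) (c1 * c2) (0 : ℝ) (0 : ℝ) (0 : ℝ) (0 : ℝ) s using 1
  push_cast; ring

lemma hasDerivAt_qA0 (c1 c2 s : ℝ) :
    HasDerivAt (fun x => qA0 c1 c2 x) (qAd0 c1 c2 s) s := by
  simp only [qA0, qAd0]
  convert hasDerivAt_poly (12) (6 * c1) (0 : ℝ) (0 : ℝ) (0 : ℝ) (0 : ℝ) (0 : ℝ) (0 : ℝ) s using 1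
  push_cast; ring

lemma hasDerivAt_qA1 (c1 c2 s : ℝ) :
    HasDerivAt (fun x => qA1 c1 c2 x) (qAd1 c1 c2 s) s := by
  simp only [qA1, qAd1]
  convert hasDerivAt_poly (-144) (-96 * c2 - 96 * c1) (-60 * c1 * c2 - 24 * c1^2) (-12 * c1^2 * c2) (0 : ℝ) (0 : ℝ) (0 : ℝ) (0 : ℝ) s using 1
  push_cast; ring

lemma hasDerivAt_qA2 (c1 c2 s : ℝ) :
    HasDerivAt (fun x => qA2 c1 c2 x) (qAd2 c1 c2 s) s := by
  simp only [qA2, qAd2]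
  convert hasDerivAt_poly (3456) (3456 * c2 + 3456 * c1) (1152 * c2^2 + 3168 * c1 * c2 + 1152 * c1^2) (960 * c1 * c2^2 + 1008 * c1^2 * c2 + 192 * c1^3) (288 * c1^2 * c2^2 + 144 * c1^3 * c2) (36 * c1^3 * c2^2) (0 : ℝ) (0 : ℝ) s using 1
  push_cast; ring

lemma hasDerivAt_qB0 (c1 c2 s : ℝ) :
    HasDerivAt (fun x => qB0 c1 c2 x) (qBd0 c1 c2 s) s := by
  simp only [qB0, qBd0]
  convert hasDerivAt_poly (6 * c2) (3 * c1 * c2) (0 : ℝ) (0 : ℝ) (0 : ℝ) (0 : ℝ) (0 : ℝ) (0 : ℝ) s using 1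
  push_cast; ring

lemma hasDerivAt_qB1 (c1 c2 s : ℝ) :
    HasDerivAt (fun x => qB1 c1 c2 x) (qBd1 c1 c2 s) s := by
  simp only [qB1, qBd1]
  convert hasDerivAt_poly (-72 * c2) (-48 * c2^2 - 48 * c1 * c2) (-30 * c1 * c2^2 - 12 * c1^2 * c2) (-6 * c1^2 * c2^2) (0 : ℝ) (0 : ℝ) (0 : ℝ) (0 : ℝ) s using 1
  push_cast; ring

lemma hasDerivAt_qB2 (c1 c2 s : ℝ) :
    HasDerivAt (fun x => qB2 c1 c2 x) (qBd2 c1 c2 s) s := by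
  simp only [qB2, qBd2]
  convert hasDerivAt_poly (1728 * c2) (1728 * c2^2 + 1728 * c1 * c2) (576 * c2^3 + 1584 * c1 * c2^2 + 576 * c1^2 * c2) (480 * c1 * c2^3 + 504 * c1^2 * c2^2 + 96 * c1^3 * c2) (144 * c1^2 * c2^3 + 72 * c1^3 * c2^2) (18 * c1^3 * c2^3) (0 : ℝ) (0 : ℝ) s using 1
  push_cast; ring

lemma hasDerivAt_qC0 (c1 c2 s : ℝ) :
    HasDerivAt (fun x => qC0 c1 c2 x) (qCd0 c1 c2 s) s := by
  simp only [qC0, qCd0]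
  convert hasDerivAt_poly (-2 * c2 - 2 * c1) (-2 * c1 * c2) (0 : ℝ) (0 : ℝ) (0 : ℝ) (0 : ℝ) (0 : ℝ) (0 : ℝ) s using 1
  push_cast; ring

lemma hasDerivAt_qC1 (c1 c2 s : ℝ) :
    HasDerivAt (fun x => qC1 c1 c2 x) (qCd1 c1 c2 s) s := by
  simp only [qC1, qCd1]
  convert hasDerivAt_poly (48 * c2 + 48 * c1) (24 * c2^2 + 72 * c1 * c2 + 24 * c1^2) (24 * c1 * c2^2 + 24 * c1^2 * c2) (6 * c1^2 * c2^2) (0 : ℝ) (0 : ℝ) (0 : ℝ) (0 : ℝ) s using 1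
  push_cast; ring

lemma hasDerivAt_qC2 (c1 c2 s : ℝ) :
    HasDerivAt (fun x => qC2 c1 c2 x) (qCd2 c1 c2 s) s := by
  simp only [qC2, qCd2]
  convert hasDerivAt_poly (-1728 * c2 - 1728 * c1) (-1536 * c2^2 - 3648 * c1 * c2 - 1536 * c1^2) (-384 * c2^3 - 2160 * c1 * c2^2 - 2160 * c1^2 * c2 - 384 * c1^3) (-432 * c1 * c2^3 - 1008 * c1^2 * c2^2 - 432 * c1^3 * c2) (-168 * c1^2 * c2^3 - 168 * c1^3 * c2^2) (-24 * c1^3 * c2^3) (0 : ℝ) (0 : ℝ) s using 1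
  push_cast; ring

lemma vv_eq (c1 c2 x : ℝ) : vv c1 c2 x = x * DD c1 c2 x := by
  simp only [vv, DD]; ring

lemma DD_pos {c1 c2 x : ℝ} (hc1 : 0 < c1) (hc2 : 0 < c2) (hx : 0 ≤ x) : 0 < DD c1 c2 x := by
  simp only [DD]
  nlinarith [mul_nonneg hc1.le hc2.le, mul_nonneg (mul_nonneg hc1.le hc2.le) (sq_nonneg x),
    mul_nonneg (add_nonneg (mul_nonneg hc2.le hx) (mul_nonneg hc1.le hx)) hx]

lemma DD_ge {c1 c2 x : ℝ} (hc1 : 0 < c1) (hc2 : 0 < c2) (hx : 0 ≤ x) : 12 ≤ DD c1 c2 x := by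
  simp only [DD]
  nlinarith [mul_nonneg (mul_nonneg hc1.le hc2.le) (sq_nonneg x),
    mul_nonneg (add_nonneg (mul_nonneg hc2.le hx) (mul_nonneg hc1.le hx)) hx]

lemma le_vv {c1 c2 x : ℝ} (hc1 : 0 < c1) (hc2 : 0 < c2) (hx : 0 < x) : x ≤ vv c1 c2 x := by
  rw [vv_eq]
  nlinarith [mul_le_mul_of_nonneg_left (DD_ge hc1 hc2 hx.le) hx.le]

lemma vv_pos {c1 c2 x : ℝ} (hc1 : 0 < c1) (hc2 : 0 < c2) (hx : 0 < x) : 0 < vv c1 c2 x :=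
  lt_of_lt_of_le hx (le_vv hc1 hc2 hx)

/-- Quotient-rule step for `P / vv^(b+1)`. -/
lemma step0 (c1 c2 : ℝ) (P p Q : ℝ → ℝ) (b : ℕ)
    (hQ : ∀ x, Q x = p x * vv c1 c2 x - ((b:ℝ)+1) * P x * vd c1 c2 x)
    (s : ℝ) (hv : vv c1 c2 s ≠ 0) (hP : HasDerivAt P (p s) s) :
    HasDerivAt (fun x => P x / vv c1 c2 x ^ (b+1)) (Q s / vv c1 c2 s ^ (b+2)) s := by
  have hg : HasDerivAt (fun x => vv c1 c2 x ^ (b+1))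
      ((((b:ℕ)+1 : ℕ) : ℝ) * vv c1 c2 s ^ b * vd c1 c2 s) s := by
    have := (hasDerivAt_vv c1 c2 s).fun_pow (b+1)
    simpa using this
  have h := hP.div hg (pow_ne_zero _ hv)
  refine h.congr_deriv ?_; symm
  rw [hQ]
  field_simp
  push_cast
  ring

/-- Quotient-rule step for `P / (x * vv^(b+1))`. -/
lemma step1 (c1 c2 : ℝ) (P p Q : ℝ → ℝ) (b : ℕ)
    (hQ : ∀ x, Q x = p x * vv c1 c2 x - P x * DD c1 c2 x - ((b:ℝ)+1) * P x * vd c1 c2 x)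
    (s : ℝ) (hs : s ≠ 0) (hD : DD c1 c2 s ≠ 0) (hP : HasDerivAt P (p s) s) :
    HasDerivAt (fun x => P x / (x * vv c1 c2 x ^ (b+1))) (Q s / (s * vv c1 c2 s ^ (b+2))) s := by
  have hv : vv c1 c2 s ≠ 0 := by rw [vv_eq]; exact mul_ne_zero hs hD
  have hg : HasDerivAt (fun x => x * vv c1 c2 x ^ (b+1))
      (1 * vv c1 c2 s ^ (b+1) + s * ((((b:ℕ)+1 : ℕ) : ℝ) * vv c1 c2 s ^ b * vd c1 c2 s)) s := by
    have hpow : HasDerivAt (fun x => vv c1 c2 x ^ (b+1))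
        ((((b:ℕ)+1 : ℕ) : ℝ) * vv c1 c2 s ^ b * vd c1 c2 s) s := by
      have := (hasDerivAt_vv c1 c2 s).fun_pow (b+1)
      simpa using this
    exact (hasDerivAt_id' s).mul hpow
  have h := hP.div hg (mul_ne_zero hs (pow_ne_zero _ hv))
  refine h.congr_deriv ?_; symm
  rw [hQ]
  have hveq : ∀ x, vv c1 c2 x = x * DD c1 c2 x := vv_eq c1 c2
  field_simp
  rw [hveq]
  push_cast
  ring
lemma hA0 (c1 c2 s : ℝ) (hv : vv c1 c2 s ≠ 0) :
    HasDerivAt (fun x => qA0 c1 c2 x / vv c1 c2 x ^ 1) (qA1 c1 c2 s / vv c1 c2 s ^ 2) s := by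
  have hq : ∀ x, qA1 c1 c2 x = qAd0 c1 c2 x * vv c1 c2 x - (((0 : ℕ) : ℝ)+1) * qA0 c1 c2 x * vd c1 c2 x := by
    intro x
    simp only [qA0, qA1, qAd0, vv, vd, DD]
    push_cast; ring
  exact step0 c1 c2 (fun x => qA0 c1 c2 x) (fun x => qAd0 c1 c2 x) (fun x => qA1 c1 c2 x) 0 hq s hv (hasDerivAt_qA0 c1 c2 s)

lemma hA1 (c1 c2 s : ℝ) (hv : vv c1 c2 s ≠ 0) :
    HasDerivAt (fun x => qA1 c1 c2 x / vv c1 c2 x ^ 2) (qA2 c1 c2 s / vv c1 c2 s ^ 3) s := by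
  have hq : ∀ x, qA2 c1 c2 x = qAd1 c1 c2 x * vv c1 c2 x - (((1 : ℕ) : ℝ)+1) * qA1 c1 c2 x * vd c1 c2 x := by
    intro x
    simp only [qA1, qA2, qAd1, vv, vd, DD]
    push_cast; ring
  exact step0 c1 c2 (fun x => qA1 c1 c2 x) (fun x => qAd1 c1 c2 x) (fun x => qA2 c1 c2 x) 1 hq s hv (hasDerivAt_qA1 c1 c2 s)

lemma hA2 (c1 c2 s : ℝ) (hv : vv c1 c2 s ≠ 0) :
    HasDerivAt (fun x => qA2 c1 c2 x / vv c1 c2 x ^ 3) (qA3 c1 c2 s / vv c1 c2 s ^ 4) s := by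
  have hq : ∀ x, qA3 c1 c2 x = qAd2 c1 c2 x * vv c1 c2 x - (((2 : ℕ) : ℝ)+1) * qA2 c1 c2 x * vd c1 c2 x := by
    intro x
    simp only [qA2, qA3, qAd2, vv, vd, DD]
    push_cast; ring
  exact step0 c1 c2 (fun x => qA2 c1 c2 x) (fun x => qAd2 c1 c2 x) (fun x => qA3 c1 c2 x) 2 hq s hv (hasDerivAt_qA2 c1 c2 s)

lemma hB0 (c1 c2 s : ℝ) (hv : vv c1 c2 s ≠ 0) :
    HasDerivAt (fun x => qB0 c1 c2 x / vv c1 c2 x ^ 1) (qB1 c1 c2 s / vv c1 c2 s ^ 2) s := by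
  have hq : ∀ x, qB1 c1 c2 x = qBd0 c1 c2 x * vv c1 c2 x - (((0 : ℕ) : ℝ)+1) * qB0 c1 c2 x * vd c1 c2 x := by
    intro x
    simp only [qB0, qB1, qBd0, vv, vd, DD]
    push_cast; ring
  exact step0 c1 c2 (fun x => qB0 c1 c2 x) (fun x => qBd0 c1 c2 x) (fun x => qB1 c1 c2 x) 0 hq s hv (hasDerivAt_qB0 c1 c2 s)

lemma hB1 (c1 c2 s : ℝ) (hv : vv c1 c2 s ≠ 0) :
    HasDerivAt (fun x => qB1 c1 c2 x / vv c1 c2 x ^ 2) (qB2 c1 c2 s / vv c1 c2 s ^ 3) s := by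
  have hq : ∀ x, qB2 c1 c2 x = qBd1 c1 c2 x * vv c1 c2 x - (((1 : ℕ) : ℝ)+1) * qB1 c1 c2 x * vd c1 c2 x := by
    intro x
    simp only [qB1, qB2, qBd1, vv, vd, DD]
    push_cast; ring
  exact step0 c1 c2 (fun x => qB1 c1 c2 x) (fun x => qBd1 c1 c2 x) (fun x => qB2 c1 c2 x) 1 hq s hv (hasDerivAt_qB1 c1 c2 s)

lemma hB2 (c1 c2 s : ℝ) (hv : vv c1 c2 s ≠ 0) :
    HasDerivAt (fun x => qB2 c1 c2 x / vv c1 c2 x ^ 3) (qB3 c1 c2 s / vv c1 c2 s ^ 4) s := by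
  have hq : ∀ x, qB3 c1 c2 x = qBd2 c1 c2 x * vv c1 c2 x - (((2 : ℕ) : ℝ)+1) * qB2 c1 c2 x * vd c1 c2 x := by
    intro x
    simp only [qB2, qB3, qBd2, vv, vd, DD]
    push_cast; ring
  exact step0 c1 c2 (fun x => qB2 c1 c2 x) (fun x => qBd2 c1 c2 x) (fun x => qB3 c1 c2 x) 2 hq s hv (hasDerivAt_qB2 c1 c2 s)

lemma hC0 (c1 c2 s : ℝ) (hs : s ≠ 0) (hD : DD c1 c2 s ≠ 0) :
    HasDerivAt (fun x => qC0 c1 c2 x / (x * vv c1 c2 x ^ 1)) (qC1 c1 c2 s / (s * vv c1 c2 s ^ 2)) s := by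
  have hq : ∀ x, qC1 c1 c2 x = qCd0 c1 c2 x * vv c1 c2 x - qC0 c1 c2 x * DD c1 c2 x - (((0 : ℕ) : ℝ)+1) * qC0 c1 c2 x * vd c1 c2 x := by
    intro x
    simp only [qC0, qC1, qCd0, vv, vd, DD]
    push_cast; ring
  exact step1 c1 c2 (fun x => qC0 c1 c2 x) (fun x => qCd0 c1 c2 x) (fun x => qC1 c1 c2 x) 0 hq s hs hD (hasDerivAt_qC0 c1 c2 s)

lemma hC1 (c1 c2 s : ℝ) (hs : s ≠ 0) (hD : DD c1 c2 s ≠ 0) :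
    HasDerivAt (fun x => qC1 c1 c2 x / (x * vv c1 c2 x ^ 2)) (qC2 c1 c2 s / (s * vv c1 c2 s ^ 3)) s := by
  have hq : ∀ x, qC2 c1 c2 x = qCd1 c1 c2 x * vv c1 c2 x - qC1 c1 c2 x * DD c1 c2 x - (((1 : ℕ) : ℝ)+1) * qC1 c1 c2 x * vd c1 c2 x := by
    intro x
    simp only [qC1, qC2, qCd1, vv, vd, DD]
    push_cast; ring
  exact step1 c1 c2 (fun x => qC1 c1 c2 x) (fun x => qCd1 c1 c2 x) (fun x => qC2 c1 c2 x) 1 hq s hs hD (hasDerivAt_qC1 c1 c2 s)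

lemma hC2 (c1 c2 s : ℝ) (hs : s ≠ 0) (hD : DD c1 c2 s ≠ 0) :
    HasDerivAt (fun x => qC2 c1 c2 x / (x * vv c1 c2 x ^ 3)) (qC3 c1 c2 s / (s * vv c1 c2 s ^ 4)) s := by
  have hq : ∀ x, qC3 c1 c2 x = qCd2 c1 c2 x * vv c1 c2 x - qC2 c1 c2 x * DD c1 c2 x - (((2 : ℕ) : ℝ)+1) * qC2 c1 c2 x * vd c1 c2 x := by
    intro x
    simp only [qC2, qC3, qCd2, vv, vd, DD]
    push_cast; ring
  exact step1 c1 c2 (fun x => qC2 c1 c2 x) (fun x => qCd2 c1 c2 x) (fun x => qC3 c1 c2 x) 2 hq s hs hD (hasDerivAt_qC2 c1 c2 s)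

/-! ### The function `G` and its partial derivatives -/

def GG (c1 c2 s z : ℝ) : ℝ :=
  z * (qA0 c1 c2 s / vv c1 c2 s ^ 1) + z ^ 2 * (qB0 c1 c2 s / vv c1 c2 s ^ 1) +
    z ^ 3 * (qC0 c1 c2 s / (s * vv c1 c2 s ^ 1))

def GGs (c1 c2 s z : ℝ) : ℝ :=
  z * (qA1 c1 c2 s / vv c1 c2 s ^ 2) + z ^ 2 * (qB1 c1 c2 s / vv c1 c2 s ^ 2) +
    z ^ 3 * (qC1 c1 c2 s / (s * vv c1 c2 s ^ 2))

def GGss (c1 c2 s z : ℝ) : ℝ :=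
  z * (qA2 c1 c2 s / vv c1 c2 s ^ 3) + z ^ 2 * (qB2 c1 c2 s / vv c1 c2 s ^ 3) +
    z ^ 3 * (qC2 c1 c2 s / (s * vv c1 c2 s ^ 3))

def GGsss (c1 c2 s z : ℝ) : ℝ :=
  z * (qA3 c1 c2 s / vv c1 c2 s ^ 4) + z ^ 2 * (qB3 c1 c2 s / vv c1 c2 s ^ 4) +
    z ^ 3 * (qC3 c1 c2 s / (s * vv c1 c2 s ^ 4))

def GGz (c1 c2 s z : ℝ) : ℝ :=
  qA0 c1 c2 s / vv c1 c2 s ^ 1 + 2 * z * (qB0 c1 c2 s / vv c1 c2 s ^ 1) +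
    3 * z ^ 2 * (qC0 c1 c2 s / (s * vv c1 c2 s ^ 1))

def GGsz (c1 c2 s z : ℝ) : ℝ :=
  qA1 c1 c2 s / vv c1 c2 s ^ 2 + 2 * z * (qB1 c1 c2 s / vv c1 c2 s ^ 2) +
    3 * z ^ 2 * (qC1 c1 c2 s / (s * vv c1 c2 s ^ 2))

def GGssz (c1 c2 s z : ℝ) : ℝ :=
  qA2 c1 c2 s / vv c1 c2 s ^ 3 + 2 * z * (qB2 c1 c2 s / vv c1 c2 s ^ 3) +
    3 * z ^ 2 * (qC2 c1 c2 s / (s * vv c1 c2 s ^ 3))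

def GGzz (c1 c2 s z : ℝ) : ℝ :=
  2 * (qB0 c1 c2 s / vv c1 c2 s ^ 1) + 6 * z * (qC0 c1 c2 s / (s * vv c1 c2 s ^ 1))

def GGszz (c1 c2 s z : ℝ) : ℝ :=
  2 * (qB1 c1 c2 s / vv c1 c2 s ^ 2) + 6 * z * (qC1 c1 c2 s / (s * vv c1 c2 s ^ 2))

section Gderivs

variable {c1 c2 s : ℝ} (z : ℝ) (hs : s ≠ 0) (hD : DD c1 c2 s ≠ 0)

lemma vv_ne (hs : s ≠ 0) (hD : DD c1 c2 s ≠ 0) : vv c1 c2 s ≠ 0 := by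
  rw [vv_eq]; exact mul_ne_zero hs hD

lemma L1 (hs : s ≠ 0) (hD : DD c1 c2 s ≠ 0) :
    HasDerivAt (fun x => GG c1 c2 x z) (GGs c1 c2 s z) s := by
  have hv := vv_ne hs hD
  simp only [GG, GGs]
  exact (((hA0 c1 c2 s hv).const_mul z).add ((hB0 c1 c2 s hv).const_mul (z^2))).add
    ((hC0 c1 c2 s hs hD).const_mul (z^3))

lemma L2 (hs : s ≠ 0) (hD : DD c1 c2 s ≠ 0) :
    HasDerivAt (fun x => GGs c1 c2 x z) (GGss c1 c2 s z) s := by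
  have hv := vv_ne hs hD
  simp only [GGs, GGss]
  exact (((hA1 c1 c2 s hv).const_mul z).add ((hB1 c1 c2 s hv).const_mul (z^2))).add
    ((hC1 c1 c2 s hs hD).const_mul (z^3))

lemma L3 (hs : s ≠ 0) (hD : DD c1 c2 s ≠ 0) :
    HasDerivAt (fun x => GGss c1 c2 x z) (GGsss c1 c2 s z) s := by
  have hv := vv_ne hs hD
  simp only [GGss, GGsss]
  exact (((hA2 c1 c2 s hv).const_mul z).add ((hB2 c1 c2 s hv).const_mul (z^2))).add
    ((hC2 c1 c2 s hs hD).const_mul (z^3))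

lemma L5 (hs : s ≠ 0) (hD : DD c1 c2 s ≠ 0) :
    HasDerivAt (fun x => GGsz c1 c2 x z) (GGssz c1 c2 s z) s := by
  have hv := vv_ne hs hD
  simp only [GGsz, GGssz]
  exact (((hA1 c1 c2 s hv)).add ((hB1 c1 c2 s hv).const_mul (2*z))).add
    ((hC1 c1 c2 s hs hD).const_mul (3*z^2))

lemma L6 (hs : s ≠ 0) (hD : DD c1 c2 s ≠ 0) :
    HasDerivAt (fun x => GGzz c1 c2 x z) (GGszz c1 c2 s z) s := by
  have hv := vv_ne hs hD
  simp only [GGzz, GGszz]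
  exact ((hB0 c1 c2 s hv).const_mul 2).add ((hC0 c1 c2 s hs hD).const_mul (6*z))

lemma Lz (c1 c2 s z : ℝ) :
    HasDerivAt (fun w => GG c1 c2 s w) (GGz c1 c2 s z) z := by
  simp only [GG, GGz]
  have h := (((hasDerivAt_id' z).mul_const (qA0 c1 c2 s / vv c1 c2 s ^ 1)).add
    ((hasDerivAt_pow 2 z).mul_const (qB0 c1 c2 s / vv c1 c2 s ^ 1))).add
    ((hasDerivAt_pow 3 z).mul_const (qC0 c1 c2 s / (s * vv c1 c2 s ^ 1)))
  refine h.congr_deriv ?_; symm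
  simp only [Nat.reduceSub, pow_one]
  push_cast
  ring

lemma Lzs (c1 c2 s z : ℝ) :
    HasDerivAt (fun w => GGs c1 c2 s w) (GGsz c1 c2 s z) z := by
  simp only [GGs, GGsz]
  have h := (((hasDerivAt_id' z).mul_const (qA1 c1 c2 s / vv c1 c2 s ^ 2)).add
    ((hasDerivAt_pow 2 z).mul_const (qB1 c1 c2 s / vv c1 c2 s ^ 2))).add
    ((hasDerivAt_pow 3 z).mul_const (qC1 c1 c2 s / (s * vv c1 c2 s ^ 2)))
  refine h.congr_deriv ?_; symm
  simp only [Nat.reduceSub, pow_one]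
  push_cast
  ring

lemma Lzz (c1 c2 s z : ℝ) :
    HasDerivAt (fun w => GGz c1 c2 s w) (GGzz c1 c2 s z) z := by
  simp only [GGz, GGzz]
  have h := ((hasDerivAt_const z (qA0 c1 c2 s / vv c1 c2 s ^ 1)).add
    (((hasDerivAt_id' z).const_mul 2).mul_const (qB0 c1 c2 s / vv c1 c2 s ^ 1))).add
    (((hasDerivAt_pow 2 z).const_mul 3).mul_const (qC0 c1 c2 s / (s * vv c1 c2 s ^ 1)))
  refine h.congr_deriv ?_; symm
  simp only [Nat.reduceSub, pow_one]
  push_cast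
  ring

end Gderivs

/-! ### Facts about `gam` -/

def g1 (r : ℝ) : ℝ := r / Real.sqrt (1 - r ^ 2)

def g2 (r : ℝ) : ℝ := 1 / ((1 - r ^ 2) * Real.sqrt (1 - r ^ 2))

lemma gam_nonneg (r : ℝ) : 0 ≤ gam r := by
  have h : Real.sqrt (1 - r ^ 2) ≤ 1 := Real.sqrt_le_one.mpr (by nlinarith [sq_nonneg r])
  simp only [gam]; linarith

lemma sqrt_lb {r : ℝ} (hr : -1/2 < r) (hr' : r < 1/2) : 1/2 ≤ Real.sqrt (1 - r ^ 2) := by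
  have h : (1/2 : ℝ) = Real.sqrt (1/4) := by
    rw [show (1/4 : ℝ) = (1/2)^2 by norm_num, Real.sqrt_sq (by norm_num)]
  rw [h]
  exact Real.sqrt_le_sqrt (by nlinarith)

lemma gam_le_half {r : ℝ} (hr : -1/2 < r) (hr' : r < 1/2) : gam r ≤ 1/2 := by
  have := sqrt_lb hr hr'
  simp only [gam]; linarith

lemma gam_ge {r : ℝ} (hr : r ^ 2 ≤ 1) : r ^ 2 / 2 ≤ gam r := by
  have h1 : Real.sqrt (1 - r ^ 2) ≤ 1 - r ^ 2 / 2 := by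
    have h2 : (1 : ℝ) - r ^ 2 ≤ (1 - r ^ 2 / 2) ^ 2 := by nlinarith
    calc Real.sqrt (1 - r ^ 2) ≤ Real.sqrt ((1 - r ^ 2 / 2) ^ 2) := Real.sqrt_le_sqrt h2
      _ = 1 - r ^ 2 / 2 := Real.sqrt_sq (by nlinarith)
  simp only [gam]; linarith

lemma hasDerivAt_gam {r : ℝ} (hr : r ^ 2 < 1) : HasDerivAt gam (g1 r) r := by
  have h0 : (0:ℝ) < 1 - r ^ 2 := by linarith
  have hsq : (0:ℝ) < Real.sqrt (1 - r ^ 2) := Real.sqrt_pos.mpr h0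
  have h1 : HasDerivAt (fun x : ℝ => 1 - x ^ 2) (-(2 * r)) r := by
    have := (hasDerivAt_pow 2 r).const_sub 1
    refine this.congr_deriv ?_; symm
    push_cast; ring
  have h2 := (Real.hasDerivAt_sqrt h0.ne').comp r h1
  have h3 := h2.const_sub 1
  have h4 : HasDerivAt (fun x : ℝ => 1 - Real.sqrt (1 - x ^ 2)) (g1 r) r := by
    refine h3.congr_deriv ?_; symm
    simp only [g1, Function.comp]
    field_simp
  exact h4

lemma hasDerivAt_g1 {r : ℝ} (hr : r ^ 2 < 1) : HasDerivAt g1 (g2 r) r := by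
  have h0 : (0:ℝ) < 1 - r ^ 2 := by linarith
  have hsq : (0:ℝ) < Real.sqrt (1 - r ^ 2) := Real.sqrt_pos.mpr h0
  have hss : Real.sqrt (1 - r ^ 2) * Real.sqrt (1 - r ^ 2) = 1 - r ^ 2 :=
    Real.mul_self_sqrt h0.le
  have h1 : HasDerivAt (fun x : ℝ => 1 - x ^ 2) (-(2 * r)) r := by
    have := (hasDerivAt_pow 2 r).const_sub 1
    refine this.congr_deriv ?_; symm
    push_cast; ring
  have h2 := (Real.hasDerivAt_sqrt h0.ne').comp r h1
  have h3 := (hasDerivAt_id' r).div h2 hsq.ne'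
  refine h3.congr_deriv ?_; symm
  simp only [g2, Function.comp]
  rw [Real.sq_sqrt h0.le]
  rw [div_eq_div_iff (mul_pos h0 hsq).ne' h0.ne']
  field_simp
  linear_combination (-1) * hss

lemma GG_eq (c1 c2 s z : ℝ) (hs : s ≠ 0) (hD : DD c1 c2 s ≠ 0) :
    GG c1 c2 s z =
      6 * (2 + c1 * s) / DD c1 c2 s * (z / s) +
      3 * (2 + c1 * s) * (c2 * s) / DD c1 c2 s * (z / s) ^ 2 +
      -(2 * (c1 * s + c1 * s * (c2 * s) + c2 * s)) / DD c1 c2 s * (z / s) ^ 3 := by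
  have hv : vv c1 c2 s = s * DD c1 c2 s := vv_eq c1 c2 s
  simp only [GG, qA0, qB0, qC0, hv, pow_one]
  have hDD' : DD c1 c2 s = 12 + (4 * c2 + 4 * c1) * s ^ 1 + c1 * c2 * s ^ 2 +
      (0:ℝ) * s ^ 3 + (0:ℝ) * s ^ 4 + (0:ℝ) * s ^ 5 + (0:ℝ) * s ^ 6 + (0:ℝ) * s ^ 7 := by
    simp only [DD]
  field_simp
  ring

lemma Psi_eq {βS βΩ : ℝ} (hβS : βS ≠ 0) (hβΩ : 0 < βΩ) (h r z : ℝ)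
    (hc1 : (0:ℝ) < 1/βS + 2) (hs : 0 < h + gam r) :
    Psi βS βΩ h r z = GG (1/βS + 2) (1/βΩ) (h + gam r) z := by
  have hc2 : (0:ℝ) < 1/βΩ := by positivity
  have hD : DD (1/βS + 2) (1/βΩ) (h + gam r) ≠ 0 :=
    ne_of_gt (DD_pos hc1 hc2 hs.le)
  have hDD : 12 + 4 * (aS βS h r + aP βΩ h r) + aS βS h r * aP βΩ h r
      = DD (1/βS + 2) (1/βΩ) (h + gam r) := by
    simp only [aS, aP, DD]; ring
  have haS : aS βS h r = (1/βS + 2) * (h + gam r) := rfl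
  have haP : aP βΩ h r = 1/βΩ * (h + gam r) := by simp only [aP]; ring
  rw [Psi, Phi, hDD, haS, haP, GG_eq _ _ _ _ hs.ne' hD]

lemma g1_bound {r : ℝ} (hr0 : 0 ≤ r) (hr : r < 1/2) : |g1 r| ≤ 2 * r := by
  have hlb := sqrt_lb (by linarith) hr
  have hsq : (0:ℝ) < Real.sqrt (1 - r ^ 2) := by linarith
  rw [g1, abs_div, abs_of_nonneg hr0, abs_of_pos hsq, div_le_iff₀ hsq]
  nlinarith

lemma g2_bound {r : ℝ} (hr0 : 0 ≤ r) (hr : r < 1/2) : |g2 r| ≤ 3 := by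
  have hlb := sqrt_lb (by linarith) hr
  have h0 : (0:ℝ) < 1 - r ^ 2 := by nlinarith
  have hsq : (0:ℝ) < Real.sqrt (1 - r ^ 2) := by linarith
  rw [g2, abs_div, abs_of_nonneg (by norm_num : (0:ℝ) ≤ 1), abs_of_pos (by nlinarith)]
  rw [div_le_iff₀ (by nlinarith)]
  nlinarith

lemma div_bound {q M d e : ℝ} (h1 : |q| ≤ M) (h2 : 0 < e) (h3 : e ≤ d) : |q / d| ≤ M / e := by
  rw [abs_div, abs_of_pos (h2.trans_le h3)]
  exact div_le_div₀ ((abs_nonneg q).trans h1) h1 h2 h3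

lemma term_le {z s X M a : ℝ} (j m t : ℕ) (ha : 0 ≤ a) (hM : 0 ≤ M)
    (hs0 : 0 < s) (hs1 : s ≤ 1) (hz0 : 0 ≤ z) (hz : z ≤ s)
    (hmt : m ≤ j + t) (hX : |X| ≤ M / s ^ m) :
    |a * z ^ j * X| ≤ a * M / s ^ t := by
  have hsm : (0:ℝ) < s ^ m := pow_pos hs0 m
  have hst : (0:ℝ) < s ^ t := pow_pos hs0 t
  have h1 : |a * z ^ j * X| = a * z ^ j * |X| := by
    rw [abs_mul, abs_of_nonneg (by positivity)]
  have h2 : a * z ^ j * |X| ≤ a * z ^ j * (M / s ^ m) :=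
    mul_le_mul_of_nonneg_left hX (by positivity)
  have h3 : a * z ^ j * (M / s ^ m) ≤ a * M / s ^ t := by
    rw [← mul_div_assoc, div_le_div_iff₀ hsm hst]
    have hpow : s ^ (j + t) ≤ s ^ m := pow_le_pow_of_le_one hs0.le hs1 hmt
    calc a * z ^ j * M * s ^ t ≤ a * s ^ j * M * s ^ t := by gcongr
      _ = a * M * s ^ (j + t) := by rw [pow_add]; ring
      _ ≤ a * M * s ^ m := mul_le_mul_of_nonneg_left hpow (mul_nonneg ha hM)
  rw [h1]; exact h2.trans h3

lemma abs_add3 {x y w a b c : ℝ} (hx : |x| ≤ a) (hy : |y| ≤ b) (hw : |w| ≤ c) :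
    |x + y + w| ≤ a + b + c := by
  calc |x + y + w| ≤ |x + y| + |w| := abs_add_le _ _
    _ ≤ |x| + |y| + |w| := by linarith [abs_add_le x y]
    _ ≤ a + b + c := by linarith

end PsiAux

set_option maxHeartbeats 4000000 in
open PsiAux in
/-- Proposition A.1, `h`-derivative estimates (slip case): bounds on `∂_hΨ`, `∂_{rh}Ψ`,
`∂_{zzh}Ψ`, `∂_{rrh}Ψ`, `∂_{hz}Ψ` and `∂_{rzh}Ψ`, where `Ψ` is viewed as a function of
the three variables `(h,r,z)`. -/
theorem Psi_bounds_h_derivatives (δ βS βΩ : ℝ) (hδ : δ ∈ Set.Ioo (0 : ℝ) (1 / 4))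
    (hβS : 0 < βS) (hβΩ : 0 < βΩ) :
    ∃ C : ℝ, 0 < C ∧ ∀ h ∈ Set.Ioo (0 : ℝ) (1 / 4), ∀ r z : ℝ,
      0 < r → r < δ → 0 < z → z < h + gam r →
      |dH3 (Psi βS βΩ) h r z| ≤ C / (h + gam r) ∧
      |dH3 (dR3 (Psi βS βΩ)) h r z| ≤ C / (h + gam r) + C * r / (h + gam r) ^ 2 ∧
      |dH3 (dZ3 (dZ3 (Psi βS βΩ))) h r z| + |dH3 (dR3 (dR3 (Psi βS βΩ))) h r z| +
          |dZ3 (dH3 (Psi βS βΩ)) h r z| ≤ C / (h + gam r) ^ 2 ∧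
      |dH3 (dZ3 (dR3 (Psi βS βΩ))) h r z| ≤
        C / (h + gam r) ^ 2 + C * r / (h + gam r) ^ 3 := by
  obtain ⟨hδ0, hδ4⟩ := hδ
  have hc1 : (0:ℝ) < 1/βS + 2 := by positivity
  have hc2 : (0:ℝ) < 1/βΩ := by positivity
  obtain ⟨MA1, hMA1p, hMA1⟩ := exists_bound (fun x => qA1 (1/βS + 2) (1/βΩ) x)
    (by simp only [qA1]; fun_prop)
  obtain ⟨MA2, hMA2p, hMA2⟩ := exists_bound (fun x => qA2 (1/βS + 2) (1/βΩ) x)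
    (by simp only [qA2]; fun_prop)
  obtain ⟨MA3, hMA3p, hMA3⟩ := exists_bound (fun x => qA3 (1/βS + 2) (1/βΩ) x)
    (by simp only [qA3]; fun_prop)
  obtain ⟨MB1, hMB1p, hMB1⟩ := exists_bound (fun x => qB1 (1/βS + 2) (1/βΩ) x)
    (by simp only [qB1]; fun_prop)
  obtain ⟨MB2, hMB2p, hMB2⟩ := exists_bound (fun x => qB2 (1/βS + 2) (1/βΩ) x)
    (by simp only [qB2]; fun_prop)
  obtain ⟨MB3, hMB3p, hMB3⟩ := exists_bound (fun x => qB3 (1/βS + 2) (1/βΩ) x)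
    (by simp only [qB3]; fun_prop)
  obtain ⟨MC1, hMC1p, hMC1⟩ := exists_bound (fun x => qC1 (1/βS + 2) (1/βΩ) x)
    (by simp only [qC1]; fun_prop)
  obtain ⟨MC2, hMC2p, hMC2⟩ := exists_bound (fun x => qC2 (1/βS + 2) (1/βΩ) x)
    (by simp only [qC2]; fun_prop)
  obtain ⟨MC3, hMC3p, hMC3⟩ := exists_bound (fun x => qC3 (1/βS + 2) (1/βΩ) x)
    (by simp only [qC3]; fun_prop)
  refine ⟨100 * (MA1 + MB1 + MC1 + MA2 + MB2 + MC2 + MA3 + MB3 + MC3), by linarith, ?_⟩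
  intro h hh r z hr0 hrδ hz0 hzs
  obtain ⟨hh0, hh4⟩ := hh
  set c1 : ℝ := 1/βS + 2 with hc1def
  set c2 : ℝ := 1/βΩ with hc2def
  have hr4 : r < 1/4 := hrδ.trans hδ4
  have hrr : r ^ 2 < 1 := by nlinarith
  have hgam0 : 0 ≤ gam r := gam_nonneg r
  set s : ℝ := h + gam r with hsdef
  have hs0 : 0 < s := by rw [hsdef]; linarith
  have hs1 : s ≤ 1 := by
    rw [hsdef]
    have := gam_le_half (show -1/2 < r by linarith) (by linarith)
    linarith
  have hsne : s ≠ 0 := ne_of_gt hs0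
  have hDpos : 0 < DD c1 c2 s := DD_pos hc1 hc2 (le_of_lt hs0)
  have hDne : DD c1 c2 s ≠ 0 := ne_of_gt hDpos
  have hvvne : vv c1 c2 s ≠ 0 := vv_ne hsne hDne
  have hsvv : s ≤ vv c1 c2 s := le_vv hc1 hc2 hs0
  have hzle : z ≤ s := le_of_lt hzs
  have hr2s : r ^ 2 ≤ 2 * s := by
    rw [hsdef]
    have := gam_ge (le_of_lt hrr)
    linarith
  -- identity helpers
  have hPsiEq : ∀ h' r' z' : ℝ, 0 < h' + gam r' →
      Psi βS βΩ h' r' z' = GG c1 c2 (h' + gam r') z' := fun h' r' z' hpos =>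
    Psi_eq (ne_of_gt hβS) hβΩ h' r' z' hc1 hpos
  have hadd : HasDerivAt (fun h' : ℝ => h' + gam r) 1 h := (hasDerivAt_id' h).add_const (gam r)
  have hgamD : HasDerivAt gam (g1 r) r := hasDerivAt_gam hrr
  have hsp : ∀ h' : ℝ, 0 < h' → 0 < h' + gam r := fun h' hh' => by linarith
  have hDp' : ∀ h' : ℝ, 0 < h' → DD c1 c2 (h' + gam r) ≠ 0 := fun h' hh' =>
    ne_of_gt (DD_pos hc1 hc2 (le_of_lt (hsp h' hh')))
  -- ∂_h Ψ
  have EH : ∀ z', deriv (fun h' => Psi βS βΩ h' r z') h = GGs c1 c2 s z' := by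
    intro z'
    have hev : (fun h' => Psi βS βΩ h' r z') =ᶠ[nhds h] (fun h' => GG c1 c2 (h' + gam r) z') := by
      filter_upwards [Ioi_mem_nhds hh0] with h' hh'
      exact hPsiEq h' r z' (hsp h' hh')
    rw [hev.deriv_eq]
    have := (L1 z' hsne hDne).comp h hadd
    simpa [Function.comp_def] using this.deriv
  -- ∂_r Ψ, as a formula valid for all parameters
  have ER : ∀ r' : ℝ, r' ^ 2 < 1 → ∀ h' : ℝ, 0 < h' → ∀ z' : ℝ,
      deriv (fun ρ => Psi βS βΩ h' ρ z') r' = GGs c1 c2 (h' + gam r') z' * g1 r' := by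
    intro r' hr' h' hh' z'
    have hfun : (fun ρ => Psi βS βΩ h' ρ z') = fun ρ => GG c1 c2 (h' + gam ρ) z' :=
      funext fun ρ => hPsiEq h' ρ z' (by linarith [gam_nonneg ρ])
    rw [hfun]
    have hsp' : 0 < h' + gam r' := by linarith [gam_nonneg r']
    have hg : HasDerivAt (fun ρ : ℝ => h' + gam ρ) (g1 r') r' :=
      (hasDerivAt_gam hr').const_add h'
    have := (L1 z' (ne_of_gt hsp') (ne_of_gt (DD_pos hc1 hc2 (le_of_lt hsp')))).comp r' hg
    simpa [Function.comp_def] using this.deriv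
  have E1 : dH3 (Psi βS βΩ) h r z = GGs c1 c2 s z := by
    simp only [dH3]; exact EH z
  have E2 : dH3 (dR3 (Psi βS βΩ)) h r z = GGss c1 c2 s z * g1 r := by
    simp only [dH3, dR3]
    have hev : (fun h' => deriv (fun r' => Psi βS βΩ h' r' z) r) =ᶠ[nhds h]
        (fun h' => GGs c1 c2 (h' + gam r) z * g1 r) := by
      filter_upwards [Ioi_mem_nhds hh0] with h' hh'
      exact ER r hrr h' hh' z
    rw [hev.deriv_eq]
    have := ((L2 z hsne hDne).comp h hadd).mul_const (g1 r)
    simpa [Function.comp_def] using this.deriv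
  have E3a : dH3 (dZ3 (dZ3 (Psi βS βΩ))) h r z = GGszz c1 c2 s z := by
    simp only [dH3, dZ3]
    have hev : (fun h' => deriv (fun z' => deriv (fun z'' => Psi βS βΩ h' r z'') z') z)
        =ᶠ[nhds h] (fun h' => GGzz c1 c2 (h' + gam r) z) := by
      filter_upwards [Ioi_mem_nhds hh0] with h' hh'
      have hfun : (fun z'' => Psi βS βΩ h' r z'') = fun z'' => GG c1 c2 (h' + gam r) z'' :=
        funext fun z'' => hPsiEq h' r z'' (hsp h' hh')
      rw [hfun]
      have hfun2 : (fun z' => deriv (fun z'' => GG c1 c2 (h' + gam r) z'') z') =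
          fun z' => GGz c1 c2 (h' + gam r) z' :=
        funext fun z' => (Lz c1 c2 (h' + gam r) z').deriv
      rw [hfun2]
      exact (Lzz c1 c2 (h' + gam r) z).deriv
    rw [hev.deriv_eq]
    have := (L6 z hsne hDne).comp h hadd
    simpa [Function.comp_def] using this.deriv
  have E3b : dH3 (dR3 (dR3 (Psi βS βΩ))) h r z =
      GGsss c1 c2 s z * g1 r * g1 r + GGss c1 c2 s z * g2 r := by
    simp only [dH3, dR3]
    have hev : (fun h' => deriv (fun r' => deriv (fun ρ => Psi βS βΩ h' ρ z) r') r)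
        =ᶠ[nhds h] (fun h' => GGss c1 c2 (h' + gam r) z * g1 r * g1 r +
          GGs c1 c2 (h' + gam r) z * g2 r) := by
      filter_upwards [Ioi_mem_nhds hh0] with h' hh'
      have hev2 : (fun r' => deriv (fun ρ => Psi βS βΩ h' ρ z) r') =ᶠ[nhds r]
          (fun r' => GGs c1 c2 (h' + gam r') z * g1 r') := by
        filter_upwards [Ioo_mem_nhds (show -(1:ℝ) < r by linarith) (show r < 1 by linarith)]
          with r' hr'
        exact ER r' (by obtain ⟨a, b⟩ := hr'; nlinarith) h' hh' z
      rw [hev2.deriv_eq]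
      have hsp' : 0 < h' + gam r := hsp h' hh'
      have hg : HasDerivAt (fun ρ : ℝ => h' + gam ρ) (g1 r) r := hgamD.const_add h'
      have h1 : HasDerivAt (fun r' => GGs c1 c2 (h' + gam r') z)
          (GGss c1 c2 (h' + gam r) z * g1 r) r := by
        have := (L2 z (ne_of_gt hsp') (hDp' h' hh')).comp r hg
        simpa [Function.comp_def] using this
      have h2 := h1.mul (hasDerivAt_g1 hrr)
      simpa [Pi.mul_def] using h2.deriv
    rw [hev.deriv_eq]
    have houter := (((L3 z hsne hDne).comp h hadd).mul_const (g1 r)).mul_const (g1 r)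
    have houter2 := ((L2 z hsne hDne).comp h hadd).mul_const (g2 r)
    have := houter.add houter2
    simpa [Function.comp_def, Pi.add_def] using this.deriv
  have E3c : dZ3 (dH3 (Psi βS βΩ)) h r z = GGsz c1 c2 s z := by
    simp only [dZ3, dH3]
    have hfun : (fun z' => deriv (fun h' => Psi βS βΩ h' r z') h) = fun z' => GGs c1 c2 s z' :=
      funext EH
    rw [hfun]
    exact (Lzs c1 c2 s z).deriv
  have E4 : dH3 (dZ3 (dR3 (Psi βS βΩ))) h r z = GGssz c1 c2 s z * g1 r := by
    simp only [dH3, dZ3, dR3]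
    have hev : (fun h' => deriv (fun z' => deriv (fun ρ => Psi βS βΩ h' ρ z') r) z)
        =ᶠ[nhds h] (fun h' => GGsz c1 c2 (h' + gam r) z * g1 r) := by
      filter_upwards [Ioi_mem_nhds hh0] with h' hh'
      have hfun : (fun z' => deriv (fun ρ => Psi βS βΩ h' ρ z') r) =
          fun z' => GGs c1 c2 (h' + gam r) z' * g1 r :=
        funext fun z' => ER r hrr h' hh' z'
      rw [hfun]
      exact ((Lzs c1 c2 (h' + gam r) z).mul_const (g1 r)).deriv
    rw [hev.deriv_eq]
    have := ((L5 z hsne hDne).comp h hadd).mul_const (g1 r)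
    simpa [Function.comp_def] using this.deriv
  -- quotient bounds at the point s
  have hIcc : s ∈ Set.Icc (0:ℝ) 1 := ⟨hs0.le, hs1⟩
  have bA1 : |qA1 c1 c2 s / vv c1 c2 s ^ 2| ≤ MA1 / s ^ 2 :=
    div_bound (hMA1 s hIcc) (pow_pos hs0 2) (pow_le_pow_left₀ hs0.le hsvv 2)
  have bA2 : |qA2 c1 c2 s / vv c1 c2 s ^ 3| ≤ MA2 / s ^ 3 :=
    div_bound (hMA2 s hIcc) (pow_pos hs0 3) (pow_le_pow_left₀ hs0.le hsvv 3)
  have bA3 : |qA3 c1 c2 s / vv c1 c2 s ^ 4| ≤ MA3 / s ^ 4 :=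
    div_bound (hMA3 s hIcc) (pow_pos hs0 4) (pow_le_pow_left₀ hs0.le hsvv 4)
  have bB1 : |qB1 c1 c2 s / vv c1 c2 s ^ 2| ≤ MB1 / s ^ 2 :=
    div_bound (hMB1 s hIcc) (pow_pos hs0 2) (pow_le_pow_left₀ hs0.le hsvv 2)
  have bB2 : |qB2 c1 c2 s / vv c1 c2 s ^ 3| ≤ MB2 / s ^ 3 :=
    div_bound (hMB2 s hIcc) (pow_pos hs0 3) (pow_le_pow_left₀ hs0.le hsvv 3)
  have bB3 : |qB3 c1 c2 s / vv c1 c2 s ^ 4| ≤ MB3 / s ^ 4 :=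
    div_bound (hMB3 s hIcc) (pow_pos hs0 4) (pow_le_pow_left₀ hs0.le hsvv 4)
  have bC1 : |qC1 c1 c2 s / (s * vv c1 c2 s ^ 2)| ≤ MC1 / s ^ 3 :=
    div_bound (hMC1 s hIcc) (pow_pos hs0 3) (by
      calc s ^ 3 = s * s ^ 2 := by ring
        _ ≤ s * vv c1 c2 s ^ 2 :=
          mul_le_mul_of_nonneg_left (pow_le_pow_left₀ hs0.le hsvv 2) hs0.le)
  have bC2 : |qC2 c1 c2 s / (s * vv c1 c2 s ^ 3)| ≤ MC2 / s ^ 4 :=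
    div_bound (hMC2 s hIcc) (pow_pos hs0 4) (by
      calc s ^ 4 = s * s ^ 3 := by ring
        _ ≤ s * vv c1 c2 s ^ 3 :=
          mul_le_mul_of_nonneg_left (pow_le_pow_left₀ hs0.le hsvv 3) hs0.le)
  have bC3 : |qC3 c1 c2 s / (s * vv c1 c2 s ^ 4)| ≤ MC3 / s ^ 5 :=
    div_bound (hMC3 s hIcc) (pow_pos hs0 5) (by
      calc s ^ 5 = s * s ^ 4 := by ring
        _ ≤ s * vv c1 c2 s ^ 4 :=
          mul_le_mul_of_nonneg_left (pow_le_pow_left₀ hs0.le hsvv 4) hs0.le)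
  -- bounds for the G-derivatives
  have hGs : |GGs c1 c2 s z| ≤ (MA1 + MB1 + MC1) / s := by
    have heq : GGs c1 c2 s z = 1 * z ^ 1 * (qA1 c1 c2 s / vv c1 c2 s ^ 2) +
        1 * z ^ 2 * (qB1 c1 c2 s / vv c1 c2 s ^ 2) +
        1 * z ^ 3 * (qC1 c1 c2 s / (s * vv c1 c2 s ^ 2)) := by
      simp only [GGs]; ring
    rw [heq]
    have t1 := term_le 1 2 1 zero_le_one hMA1p.le hs0 hs1 hz0.le hzle (by norm_num) bA1
    have t2 := term_le 2 2 1 zero_le_one hMB1p.le hs0 hs1 hz0.le hzle (by norm_num) bB1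
    have t3 := term_le 3 3 1 zero_le_one hMC1p.le hs0 hs1 hz0.le hzle (by norm_num) bC1
    calc _ ≤ 1 * MA1 / s ^ 1 + 1 * MB1 / s ^ 1 + 1 * MC1 / s ^ 1 := abs_add3 t1 t2 t3
      _ = (MA1 + MB1 + MC1) / s := by rw [pow_one]; ring
  have hGss : |GGss c1 c2 s z| ≤ (MA2 + MB2 + MC2) / s ^ 2 := by
    have heq : GGss c1 c2 s z = 1 * z ^ 1 * (qA2 c1 c2 s / vv c1 c2 s ^ 3) +
        1 * z ^ 2 * (qB2 c1 c2 s / vv c1 c2 s ^ 3) +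
        1 * z ^ 3 * (qC2 c1 c2 s / (s * vv c1 c2 s ^ 3)) := by
      simp only [GGss]; ring
    rw [heq]
    have t1 := term_le 1 3 2 zero_le_one hMA2p.le hs0 hs1 hz0.le hzle (by norm_num) bA2
    have t2 := term_le 2 3 2 zero_le_one hMB2p.le hs0 hs1 hz0.le hzle (by norm_num) bB2
    have t3 := term_le 3 4 2 zero_le_one hMC2p.le hs0 hs1 hz0.le hzle (by norm_num) bC2
    calc _ ≤ 1 * MA2 / s ^ 2 + 1 * MB2 / s ^ 2 + 1 * MC2 / s ^ 2 := abs_add3 t1 t2 t3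
      _ = (MA2 + MB2 + MC2) / s ^ 2 := by ring
  have hGsss : |GGsss c1 c2 s z| ≤ (MA3 + MB3 + MC3) / s ^ 3 := by
    have heq : GGsss c1 c2 s z = 1 * z ^ 1 * (qA3 c1 c2 s / vv c1 c2 s ^ 4) +
        1 * z ^ 2 * (qB3 c1 c2 s / vv c1 c2 s ^ 4) +
        1 * z ^ 3 * (qC3 c1 c2 s / (s * vv c1 c2 s ^ 4)) := by
      simp only [GGsss]; ring
    rw [heq]
    have t1 := term_le 1 4 3 zero_le_one hMA3p.le hs0 hs1 hz0.le hzle (by norm_num) bA3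
    have t2 := term_le 2 4 3 zero_le_one hMB3p.le hs0 hs1 hz0.le hzle (by norm_num) bB3
    have t3 := term_le 3 5 3 zero_le_one hMC3p.le hs0 hs1 hz0.le hzle (by norm_num) bC3
    calc _ ≤ 1 * MA3 / s ^ 3 + 1 * MB3 / s ^ 3 + 1 * MC3 / s ^ 3 := abs_add3 t1 t2 t3
      _ = (MA3 + MB3 + MC3) / s ^ 3 := by ring
  have hGsz : |GGsz c1 c2 s z| ≤ (MA1 + 2 * MB1 + 3 * MC1) / s ^ 2 := by
    have heq : GGsz c1 c2 s z = 1 * z ^ 0 * (qA1 c1 c2 s / vv c1 c2 s ^ 2) +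
        2 * z ^ 1 * (qB1 c1 c2 s / vv c1 c2 s ^ 2) +
        3 * z ^ 2 * (qC1 c1 c2 s / (s * vv c1 c2 s ^ 2)) := by
      simp only [GGsz]; ring
    rw [heq]
    have t1 := term_le 0 2 2 zero_le_one hMA1p.le hs0 hs1 hz0.le hzle (by norm_num) bA1
    have t2 := term_le 1 2 2 (by norm_num : (0:ℝ) ≤ 2) hMB1p.le hs0 hs1 hz0.le hzle
      (by norm_num) bB1
    have t3 := term_le 2 3 2 (by norm_num : (0:ℝ) ≤ 3) hMC1p.le hs0 hs1 hz0.le hzle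
      (by norm_num) bC1
    calc _ ≤ 1 * MA1 / s ^ 2 + 2 * MB1 / s ^ 2 + 3 * MC1 / s ^ 2 := abs_add3 t1 t2 t3
      _ = (MA1 + 2 * MB1 + 3 * MC1) / s ^ 2 := by ring
  have hGssz : |GGssz c1 c2 s z| ≤ (MA2 + 2 * MB2 + 3 * MC2) / s ^ 3 := by
    have heq : GGssz c1 c2 s z = 1 * z ^ 0 * (qA2 c1 c2 s / vv c1 c2 s ^ 3) +
        2 * z ^ 1 * (qB2 c1 c2 s / vv c1 c2 s ^ 3) +
        3 * z ^ 2 * (qC2 c1 c2 s / (s * vv c1 c2 s ^ 3)) := by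
      simp only [GGssz]; ring
    rw [heq]
    have t1 := term_le 0 3 3 zero_le_one hMA2p.le hs0 hs1 hz0.le hzle (by norm_num) bA2
    have t2 := term_le 1 3 3 (by norm_num : (0:ℝ) ≤ 2) hMB2p.le hs0 hs1 hz0.le hzle
      (by norm_num) bB2
    have t3 := term_le 2 4 3 (by norm_num : (0:ℝ) ≤ 3) hMC2p.le hs0 hs1 hz0.le hzle
      (by norm_num) bC2
    calc _ ≤ 1 * MA2 / s ^ 3 + 2 * MB2 / s ^ 3 + 3 * MC2 / s ^ 3 := abs_add3 t1 t2 t3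
      _ = (MA2 + 2 * MB2 + 3 * MC2) / s ^ 3 := by ring
  have hGszz : |GGszz c1 c2 s z| ≤ (2 * MB1 + 6 * MC1) / s ^ 2 := by
    have heq : GGszz c1 c2 s z = 2 * z ^ 0 * (qB1 c1 c2 s / vv c1 c2 s ^ 2) +
        6 * z ^ 1 * (qC1 c1 c2 s / (s * vv c1 c2 s ^ 2)) := by
      simp only [GGszz]; ring
    rw [heq]
    have t1 := term_le 0 2 2 (by norm_num : (0:ℝ) ≤ 2) hMB1p.le hs0 hs1 hz0.le hzle
      (by norm_num) bB1
    have t2 := term_le 1 3 2 (by norm_num : (0:ℝ) ≤ 6) hMC1p.le hs0 hs1 hz0.le hzle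
      (by norm_num) bC1
    calc _ ≤ 2 * MB1 / s ^ 2 + 6 * MC1 / s ^ 2 := (abs_add_le _ _).trans (by linarith)
      _ = (2 * MB1 + 6 * MC1) / s ^ 2 := by ring
  -- abbreviations for the final constant
  have hg1b : |g1 r| ≤ 2 * r := g1_bound hr0.le (by linarith)
  have hg2b : |g2 r| ≤ 3 := g2_bound hr0.le (by linarith)
  refine ⟨?_, ?_, ?_, ?_⟩
  · -- first bound
    rw [E1]
    refine hGs.trans ?_
    exact (div_le_div_iff_of_pos_right hs0).mpr (by linarith)
  · -- second bound
    rw [E2]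
    have hb : |GGss c1 c2 s z * g1 r| ≤ (MA2 + MB2 + MC2) / s ^ 2 * (2 * r) := by
      rw [abs_mul]
      exact mul_le_mul hGss hg1b (abs_nonneg _) ((abs_nonneg _).trans hGss)
    have key : (MA2 + MB2 + MC2) * (2 * r) ≤ 100 * (MA1 + MB1 + MC1 + MA2 + MB2 + MC2 + MA3 + MB3 + MC3) * r := by
      have h1 : 2 * (MA2 + MB2 + MC2) ≤ 100 * (MA1 + MB1 + MC1 + MA2 + MB2 + MC2 + MA3 + MB3 + MC3) := by linarith
      calc (MA2 + MB2 + MC2) * (2 * r) = 2 * (MA2 + MB2 + MC2) * r := by ring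
        _ ≤ 100 * (MA1 + MB1 + MC1 + MA2 + MB2 + MC2 + MA3 + MB3 + MC3) * r := mul_le_mul_of_nonneg_right h1 hr0.le
    have hb2 : (MA2 + MB2 + MC2) / s ^ 2 * (2 * r) ≤ 100 * (MA1 + MB1 + MC1 + MA2 + MB2 + MC2 + MA3 + MB3 + MC3) * r / s ^ 2 := by
      rw [div_mul_eq_mul_div]
      exact (div_le_div_iff_of_pos_right (pow_pos hs0 2)).mpr key
    have hnn : 0 ≤ 100 * (MA1 + MB1 + MC1 + MA2 + MB2 + MC2 + MA3 + MB3 + MC3) / s := div_nonneg (by linarith) hs0.le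
    linarith [hb.trans hb2]
  · -- third bound
    rw [E3a, E3b, E3c]
    have u1 : |GGszz c1 c2 s z| ≤ (2 * MB1 + 6 * MC1) / s ^ 2 := hGszz
    have w1 : |GGsss c1 c2 s z * g1 r * g1 r| ≤
        (MA3 + MB3 + MC3) / s ^ 3 * (2 * r) * (2 * r) := by
      rw [abs_mul, abs_mul]
      have hn : 0 ≤ (MA3 + MB3 + MC3) / s ^ 3 := (abs_nonneg _).trans hGsss
      exact mul_le_mul (mul_le_mul hGsss hg1b (abs_nonneg _) hn) hg1b (abs_nonneg _)
        (mul_nonneg hn (by linarith))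
    have w1' : (MA3 + MB3 + MC3) / s ^ 3 * (2 * r) * (2 * r) ≤
        8 * (MA3 + MB3 + MC3) / s ^ 2 := by
      have hx : (MA3 + MB3 + MC3) / s ^ 3 * (2 * r) * (2 * r) =
          (MA3 + MB3 + MC3) * (4 * r ^ 2) / s ^ 3 := by ring
      rw [hx, div_le_div_iff₀ (pow_pos hs0 3) (pow_pos hs0 2)]
      have h1 : (MA3 + MB3 + MC3) * (4 * r ^ 2) ≤ (MA3 + MB3 + MC3) * (8 * s) :=
        mul_le_mul_of_nonneg_left (by linarith) (by linarith)
      calc (MA3 + MB3 + MC3) * (4 * r ^ 2) * s ^ 2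
          ≤ (MA3 + MB3 + MC3) * (8 * s) * s ^ 2 :=
            mul_le_mul_of_nonneg_right h1 (pow_pos hs0 2).le
        _ = 8 * (MA3 + MB3 + MC3) * s ^ 3 := by ring
    have w2 : |GGss c1 c2 s z * g2 r| ≤ (MA2 + MB2 + MC2) / s ^ 2 * 3 := by
      rw [abs_mul]
      exact mul_le_mul hGss hg2b (abs_nonneg _) ((abs_nonneg _).trans hGss)
    have w2' : (MA2 + MB2 + MC2) / s ^ 2 * 3 = 3 * (MA2 + MB2 + MC2) / s ^ 2 := by ring
    have u2 : |GGsss c1 c2 s z * g1 r * g1 r + GGss c1 c2 s z * g2 r| ≤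
        8 * (MA3 + MB3 + MC3) / s ^ 2 + 3 * (MA2 + MB2 + MC2) / s ^ 2 := by
      calc |GGsss c1 c2 s z * g1 r * g1 r + GGss c1 c2 s z * g2 r|
          ≤ |GGsss c1 c2 s z * g1 r * g1 r| + |GGss c1 c2 s z * g2 r| := abs_add_le _ _
        _ ≤ 8 * (MA3 + MB3 + MC3) / s ^ 2 + 3 * (MA2 + MB2 + MC2) / s ^ 2 := by
            linarith [w1.trans w1', w2' ▸ w2]
    have u3 : |GGsz c1 c2 s z| ≤ (MA1 + 2 * MB1 + 3 * MC1) / s ^ 2 := hGsz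
    have hsum : (2 * MB1 + 6 * MC1) / s ^ 2 +
        (8 * (MA3 + MB3 + MC3) / s ^ 2 + 3 * (MA2 + MB2 + MC2) / s ^ 2) +
        (MA1 + 2 * MB1 + 3 * MC1) / s ^ 2 ≤
        100 * (MA1 + MB1 + MC1 + MA2 + MB2 + MC2 + MA3 + MB3 + MC3) / s ^ 2 := by
      have heq : (2 * MB1 + 6 * MC1) / s ^ 2 +
          (8 * (MA3 + MB3 + MC3) / s ^ 2 + 3 * (MA2 + MB2 + MC2) / s ^ 2) +
          (MA1 + 2 * MB1 + 3 * MC1) / s ^ 2 =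
          (2 * MB1 + 6 * MC1 + 8 * (MA3 + MB3 + MC3) + 3 * (MA2 + MB2 + MC2) +
            (MA1 + 2 * MB1 + 3 * MC1)) / s ^ 2 := by ring
      rw [heq]
      exact (div_le_div_iff_of_pos_right (pow_pos hs0 2)).mpr (by linarith)
    linarith [u1, u2, u3]
  · -- fourth bound
    rw [E4]
    have hb : |GGssz c1 c2 s z * g1 r| ≤ (MA2 + 2 * MB2 + 3 * MC2) / s ^ 3 * (2 * r) := by
      rw [abs_mul]
      exact mul_le_mul hGssz hg1b (abs_nonneg _) ((abs_nonneg _).trans hGssz)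
    have key : (MA2 + 2 * MB2 + 3 * MC2) * (2 * r) ≤ 100 * (MA1 + MB1 + MC1 + MA2 + MB2 + MC2 + MA3 + MB3 + MC3) * r := by
      have h1 : 2 * (MA2 + 2 * MB2 + 3 * MC2) ≤ 100 * (MA1 + MB1 + MC1 + MA2 + MB2 + MC2 + MA3 + MB3 + MC3) := by linarith
      calc (MA2 + 2 * MB2 + 3 * MC2) * (2 * r) = 2 * (MA2 + 2 * MB2 + 3 * MC2) * r := by ring
        _ ≤ 100 * (MA1 + MB1 + MC1 + MA2 + MB2 + MC2 + MA3 + MB3 + MC3) * r := mul_le_mul_of_nonneg_right h1 hr0.le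
    have hb2 : (MA2 + 2 * MB2 + 3 * MC2) / s ^ 3 * (2 * r) ≤ 100 * (MA1 + MB1 + MC1 + MA2 + MB2 + MC2 + MA3 + MB3 + MC3) * r / s ^ 3 := by
      rw [div_mul_eq_mul_div]
      exact (div_le_div_iff_of_pos_right (pow_pos hs0 3)).mpr key
    have hnn : 0 ≤ 100 * (MA1 + MB1 + MC1 + MA2 + MB2 + MC2 + MA3 + MB3 + MC3) / s ^ 2 := div_nonneg (by linarith) (pow_pos hs0 2).le
    linarith [hb.trans hb2]
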